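/- For g in the opposite unipotent radical U⁻ (so g(x*_i) = x*_i + Σ_j α_i^j(g) x*_{−j}, g(x*_{−j}) = x*_{−j}), the pairing of g(x₁*∧...∧x_p*) against the monomial a_ℓ·b_ℓ evaluates to ±α₁² · det(α^{1,...,ℓ−1}_{2,3,...,ℓ}), i.e., the product of the entry α₁² with the (ℓ−1)×(ℓ−1) minor of the matrix (α_i^j) with row indices {2,3,...,ℓ} and column (superscript) indices {1,...,ℓ−1}, and this polynomial in the variables α_i^j is not identically zero. -/

import Mathlib

/-- The vector space `V_{m-1,p}` (`p = m+1`) over `k`, with basis indexed by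
`{x_{-1}, …, x_{-(m-1)}} ⊔ {x_1, …, x_p}`. -/
abbrev Vm (k : Type*) [Field k] (m : ℕ) : Type _ := (Fin (m - 1) ⊕ Fin (m + 1)) → k

/-- The basis vector `x_{-j}` of `V_{m-1,m+1}` (here `j : Fin (m-1)` encodes `x_{-(j+1)}`). -/
noncomputable def xneg (k : Type*) [Field k] (m : ℕ) (j : Fin (m - 1)) : Vm k m :=
  Pi.single (Sum.inl j) 1

/-- The basis vector `x_i` of `V_{m-1,m+1}` (here `i : Fin (m+1)` encodes `x_{i+1}`). -/
noncomputable def xpos (k : Type*) [Field k] (m : ℕ) (i : Fin (m + 1)) : Vm k m :=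
  Pi.single (Sum.inr i) 1

/-- The dual basis vector `x*_{-j}`. -/
noncomputable def cneg (k : Type*) [Field k] (m : ℕ) (j : Fin (m - 1)) :
    Module.Dual k (Vm k m) := LinearMap.proj (Sum.inl j)

/-- The dual basis vector `x*_i`. -/
noncomputable def cpos (k : Type*) [Field k] (m : ℕ) (i : Fin (m + 1)) :
    Module.Dual k (Vm k m) := LinearMap.proj (Sum.inr i)

/-- `g(x*_i) = x*_i + ∑_j α_i^j x*_{-j}`, for `g ∈ U⁻` with matrix entries `α`. -/
noncomputable def gdual (k : Type*) [Field k] (m : ℕ) (α : Fin (m + 1) → Fin (m - 1) → k)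
    (i : Fin (m + 1)) : Module.Dual k (Vm k m) :=
  cpos k m i + ∑ j, α i j • cneg k m j

/-- The tuple of basis vectors of the completed wedge monomial
`a_ℓ = x_{-2} ∧ x_2 ∧ x_3 ∧ … ∧ x_p`. -/
noncomputable def vA (k : Type*) [Field k] (m : ℕ) (hm : 3 ≤ m) :
    Fin (m + 1) → Vm k m := fun s =>
  if (s : ℕ) = 0 then xneg k m ⟨1, by omega⟩ else xpos k m s

/-- The tuple of basis vectors of the completed wedge monomial
`b_ℓ = x_{-(ℓ-1)} ∧ … ∧ x_{-1} ∧ x_1 ∧ x_{ℓ+1} ∧ … ∧ x_p`. -/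
noncomputable def vB (k : Type*) [Field k] (ℓ m : ℕ) (hℓ : 2 ≤ ℓ) (hm : ℓ ≤ m) :
    Fin (m + 1) → Vm k m := fun s =>
  if h : (s : ℕ) < ℓ - 1 then xneg k m ⟨s, by omega⟩
  else if (s : ℕ) = ℓ - 1 then xpos k m ⟨0, by omega⟩
  else xpos k m s

section Aux
variable (k : Type*) [Field k] (m : ℕ) (α : Fin (m + 1) → Fin (m - 1) → k)

lemma gdual_xneg (i : Fin (m + 1)) (j : Fin (m - 1)) :
    gdual k m α i (xneg k m j) = α i j := by
  simp [gdual, cpos, cneg, xneg, Pi.single_apply]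

lemma gdual_xpos (i i' : Fin (m + 1)) :
    gdual k m α i (xpos k m i') = if (i : ℕ) = (i' : ℕ) then 1 else 0 := by
  simp [gdual, cpos, cneg, xpos, Pi.single_apply, Fin.ext_iff, eq_comm]

end Aux
lemma detA_eq (k : Type*) [Field k] (m : ℕ) (hm : 3 ≤ m)
    (α : Fin (m + 1) → Fin (m - 1) → k) :
    Matrix.det (Matrix.of fun r s : Fin (m + 1) => gdual k m α r (vA k m hm s)) =
      α 0 ⟨1, by omega⟩ := by
  have h1 : (Matrix.of fun r s : Fin (m + 1) => gdual k m α r (vA k m hm s)) =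
      (1 : Matrix (Fin (m + 1)) (Fin (m + 1)) k).updateCol 0
        (fun r => α r ⟨1, by omega⟩) := by
    ext r s
    by_cases hs : s = 0
    · subst hs
      simp [vA, gdual_xneg, Matrix.updateCol_apply]
    · have hs' : (s : ℕ) ≠ 0 := fun h => hs (Fin.ext h)
      simp [vA, hs', gdual_xpos, Matrix.updateCol_apply, hs, Matrix.one_apply,
        Fin.val_inj]
  rw [h1, ← Matrix.cramer_apply, Matrix.cramer_one]
  rfl
lemma detB_eq (k : Type*) [Field k] (ℓ m : ℕ) (hℓ : 2 ≤ ℓ) (hm : ℓ ≤ m)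
    (α : Fin (m + 1) → Fin (m - 1) → k) :
    Matrix.det (Matrix.of fun r s : Fin (m + 1) => gdual k m α r (vB k ℓ m hℓ hm s)) =
      (-1 : k) ^ (ℓ - 1) *
        Matrix.det (Matrix.of fun i j : Fin (ℓ - 1) =>
          α ⟨(i : ℕ) + 1, by have := i.isLt; omega⟩ ⟨(j : ℕ), by have := j.isLt; omega⟩) := by
  set n := ℓ - 1 with hn
  have hn1 : n + 1 = ℓ := by omega
  set q := m + 1 - ℓ with hq
  have hsum : (n + 1) + q = m + 1 := by omega
  set B11 : Matrix (Fin (n + 1)) (Fin (n + 1)) k := Matrix.of fun r s =>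
    if hs : (s : ℕ) < n then α ⟨r, by have := r.isLt; omega⟩ ⟨s, by omega⟩
    else if (r : ℕ) = 0 then 1 else 0 with hB11
  set B21 : Matrix (Fin q) (Fin (n + 1)) k := Matrix.of fun r s =>
    if hs : (s : ℕ) < n then α ⟨n + 1 + r, by have := r.isLt; omega⟩ ⟨s, by omega⟩
    else 0 with hB21
  set e : Fin (n + 1) ⊕ Fin q ≃ Fin (m + 1) := finSumFinEquiv.trans (finCongr hsum) with he
  -- entrywise description of the big matrix
  have entry : ∀ r s : Fin (m + 1),
      gdual k m α r (vB k ℓ m hℓ hm s) =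
        if hs : (s : ℕ) < ℓ - 1 then α r ⟨s, by have := s.isLt; omega⟩
        else if (s : ℕ) = ℓ - 1 then (if (r : ℕ) = 0 then 1 else 0)
        else (if (r : ℕ) = (s : ℕ) then 1 else 0) := by
    intro r s
    unfold vB
    by_cases h1 : (s : ℕ) < ℓ - 1
    · rw [dif_pos h1, dif_pos h1, gdual_xneg]
    · rw [dif_neg h1, dif_neg h1]
      by_cases h2 : (s : ℕ) = ℓ - 1
      · rw [if_pos h2, if_pos h2, gdual_xpos]
      · rw [if_neg h2, if_neg h2, gdual_xpos]
  have hblock : Matrix.of (fun r s : Fin (m + 1) => gdual k m α r (vB k ℓ m hℓ hm s)) =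
      (Matrix.fromBlocks B11 0 B21 1).submatrix e.symm e.symm := by
    ext r s
    have hr := (e.apply_symm_apply r).symm
    have hs := (e.apply_symm_apply s).symm
    rcases hre : e.symm r with i | i <;> rcases hse : e.symm s with j | j <;>
      rw [hre] at hr <;> rw [hse] at hs <;> rw [he] at hr hs <;>
      have hrv : (r : ℕ) = _ := congrArg Fin.val hr <;>
      have hsv : (s : ℕ) = _ := congrArg Fin.val hs <;>
      simp only [Equiv.trans_apply, finCongr_apply, finSumFinEquiv_apply_left,
        finSumFinEquiv_apply_right, Fin.coe_cast, Fin.coe_castAdd, Fin.coe_natAdd]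
        at hrv hsv <;>
      rw [Matrix.submatrix_apply, hre, hse, Matrix.of_apply, entry]
    · rw [Matrix.fromBlocks_apply₁₁]
      have hi : (i : ℕ) < n + 1 := i.isLt
      by_cases hj : (j : ℕ) < n
      · rw [dif_pos (by omega), hB11, Matrix.of_apply, dif_pos hj]
        congr 1 <;> rw [Fin.ext_iff] <;> simp <;> omega
      · have hj' : (j : ℕ) = n := by have := j.isLt; omega
        rw [dif_neg (by omega), if_pos (by omega), hB11, Matrix.of_apply, dif_neg (by omega)]
        rw [hrv]
    · rw [Matrix.fromBlocks_apply₁₂]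
      rw [dif_neg (by omega), if_neg (by omega), if_neg (by have := i.isLt; omega)]
      simp
    · rw [Matrix.fromBlocks_apply₂₁]
      by_cases hj : (j : ℕ) < n
      · rw [dif_pos (by omega), hB21, Matrix.of_apply, dif_pos hj]
        congr 1 <;> rw [Fin.ext_iff] <;> simp <;> omega
      · have hj' : (j : ℕ) = n := by have := j.isLt; omega
        rw [dif_neg (by omega), if_pos (by omega), if_neg (by omega), hB21,
          Matrix.of_apply, dif_neg (by omega)]
    · rw [Matrix.fromBlocks_apply₂₂]
      rw [dif_neg (by omega), if_neg (by omega)]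
      have hij : ((r : ℕ) = (s : ℕ)) ↔ i = j := by
        rw [hrv, hsv, Fin.ext_iff]; omega
      simp [Matrix.one_apply, hij]
  rw [hblock, Matrix.det_submatrix_equiv_self, Matrix.det_fromBlocks_zero₁₂,
    Matrix.det_one, mul_one]
  -- now compute det B11 by cofactor expansion along the last column
  rw [Matrix.det_succ_column B11 (Fin.last n)]
  rw [Fintype.sum_eq_single (0 : Fin (n + 1)) (fun i hi => by
    have : B11 i (Fin.last n) = 0 := by
      rw [hB11, Matrix.of_apply, dif_neg (by simp), if_neg (fun h => hi (Fin.val_eq_zero_iff.mp h))]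
    rw [this]; ring)]
  have h0 : B11 0 (Fin.last n) = 1 := by
    rw [hB11, Matrix.of_apply, dif_neg (by simp)]; rfl
  rw [h0]
  have hsub : B11.submatrix (Fin.succAbove 0) (Fin.succAbove (Fin.last n)) =
      Matrix.of fun i j : Fin (ℓ - 1) =>
        α ⟨(i : ℕ) + 1, by have := i.isLt; omega⟩ ⟨(j : ℕ), by have := j.isLt; omega⟩ := by
    ext i j
    rw [Matrix.submatrix_apply, Fin.succAbove_zero, Fin.succAbove_last, hB11]
    rw [Matrix.of_apply, dif_pos (by simpa using j.isLt)]
    rw [Matrix.of_apply]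
    congr 1 <;> rw [Fin.ext_iff] <;> simp
  rw [hsub]
  simp
  exact Or.inl rfl
/-- For `g ∈ U⁻`, the pairing of `g(x₁* ∧ … ∧ x_p*)` against the monomial `a_ℓ · b_ℓ`
(product of the pairings against `a_ℓ` and `b_ℓ`, each computed as a determinant) equals
`± α₁² · det(α^{1,…,ℓ-1}_{2,3,…,ℓ})`, the product of the entry `α₁²` with the
`(ℓ-1) × (ℓ-1)` minor of `(α_i^j)` with row indices `{2,…,ℓ}` and column (superscript)
indices `{1,…,ℓ-1}`; moreover this polynomial in the variables `α_i^j` is not identically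
zero: it takes a nonzero value for some `α`. -/
theorem stmt_19 (k : Type*) [Field k] (ℓ m : ℕ) (hℓ : 3 < ℓ) (hm : ℓ ≤ m) :
    ∃ ε : k, (ε = 1 ∨ ε = -1) ∧
      (∀ α : Fin (m + 1) → Fin (m - 1) → k,
        Matrix.det (Matrix.of fun r s : Fin (m + 1) =>
            gdual k m α r (vA k m (by omega) s)) *
        Matrix.det (Matrix.of fun r s : Fin (m + 1) =>
            gdual k m α r (vB k ℓ m (by omega) hm s)) =
        ε * (α ⟨0, by omega⟩ ⟨1, by omega⟩ *
          Matrix.det (Matrix.of fun i j : Fin (ℓ - 1) =>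
            α ⟨(j : ℕ) + 1, by have := j.isLt; omega⟩
              ⟨(i : ℕ), by have := i.isLt; omega⟩))) ∧
      ∃ α : Fin (m + 1) → Fin (m - 1) → k,
        Matrix.det (Matrix.of fun r s : Fin (m + 1) =>
            gdual k m α r (vA k m (by omega) s)) *
        Matrix.det (Matrix.of fun r s : Fin (m + 1) =>
            gdual k m α r (vB k ℓ m (by omega) hm s)) ≠ 0 := by

  have hm3 : 3 ≤ m := by omega
  have key : ∀ α : Fin (m + 1) → Fin (m - 1) → k,
      (Matrix.of fun r s : Fin (m + 1) => gdual k m α r (vA k m hm3 s)).det *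
        (Matrix.of fun r s : Fin (m + 1) =>
          gdual k m α r (vB k ℓ m (by omega) hm s)).det =
      (-1 : k) ^ (ℓ - 1) * (α ⟨0, by omega⟩ ⟨1, by omega⟩ *
        Matrix.det (Matrix.of fun i j : Fin (ℓ - 1) =>
          α ⟨(j : ℕ) + 1, by have := j.isLt; omega⟩
            ⟨(i : ℕ), by have := i.isLt; omega⟩)) := by
    intro α
    rw [detA_eq k m hm3 α, detB_eq k ℓ m (by omega) hm α]
    have htr : (Matrix.of fun i j : Fin (ℓ - 1) =>
          α ⟨(j : ℕ) + 1, by have := j.isLt; omega⟩ ⟨(i : ℕ), by have := i.isLt; omega⟩) =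
        Matrix.transpose (Matrix.of fun i j : Fin (ℓ - 1) =>
          α ⟨(i : ℕ) + 1, by have := i.isLt; omega⟩ ⟨(j : ℕ), by have := j.isLt; omega⟩) :=
      rfl
    rw [htr, Matrix.det_transpose]
    have h0 : (0 : Fin (m + 1)) = ⟨0, by omega⟩ := rfl
    rw [h0]; ring
  refine ⟨(-1 : k) ^ (ℓ - 1), ?_, key, ?_⟩
  · rcases Nat.even_or_odd (ℓ - 1) with h | h
    · exact Or.inl h.neg_one_pow
    · exact Or.inr h.neg_one_pow
  · set α₀ : Fin (m + 1) → Fin (m - 1) → k := fun a b =>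
      if (a : ℕ) = (b : ℕ) + 1 ∨ ((a : ℕ) = 0 ∧ (b : ℕ) = 1) then 1 else 0 with hα₀
    refine ⟨α₀, ?_⟩
    rw [key α₀]
    have h1 : α₀ ⟨0, by omega⟩ ⟨1, by omega⟩ = 1 := if_pos (Or.inr ⟨rfl, rfl⟩)
    have h2 : (Matrix.of fun i j : Fin (ℓ - 1) =>
        α₀ ⟨(j : ℕ) + 1, by have := j.isLt; omega⟩
          ⟨(i : ℕ), by have := i.isLt; omega⟩) = 1 := by
      ext i j
      by_cases h : i = j
      · subst h
        rw [Matrix.of_apply, hα₀]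
        beta_reduce
        rw [if_pos (Or.inl rfl), Matrix.one_apply_eq]
      · rw [Matrix.of_apply, hα₀]
        beta_reduce
        rw [if_neg, Matrix.one_apply_ne h]
        rw [Fin.ext_iff] at h
        simp only [not_or, not_and]
        omega
    rw [h1, h2, Matrix.det_one, mul_one, mul_one]
    exact pow_ne_zero _ (neg_ne_zero.mpr one_ne_zero)
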